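/- Let Σ be the set of sequences a = (a_n)_{n∈ℤ} with a_n ∈ P (a finite set embedded in a compact metric space M) satisfying d(f_n(a_n), a_{n+1}) < α for all n, endowed with the product topology. Suppose θ : Σ → M assigns to each a the unique point θ(a) with d(F_0^n(θ(a)), a_n) ≤ β for all n ∈ ℤ, where F is expansive with expansiveness constant δ > 4β. Then θ is continuous. -/

import Mathlib

/-- continuity of the shadowing map `θ` on the space of pseudo-orbits. -/
theorem stmt_9 (M : Type*) [MetricSpace M] [CompactSpace M]
    (f : ℤ → (M ≃ₜ M))
    (F : ℤ → M → M)
    (hF0 : ∀ p, F 0 p = p)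
    (hFs : ∀ (n : ℤ) (p : M), F (n + 1) p = f n (F n p))
    (P : Finset M) (α β δ : ℝ) (hα : 0 < α) (hβ : 0 < β) (hδ : 4 * β < δ)
    (hexp : ∀ p q : M, p ≠ q → ∃ n : ℤ, δ ≤ dist (F n p) (F n q))
    (θ : {a : ℤ → M // (∀ n, a n ∈ P) ∧ ∀ n, dist (f n (a n)) (a (n + 1)) < α} → M)
    (hθ : ∀ a, ∀ n : ℤ, dist (F n (θ a)) (a.1 n) ≤ β) :
    Continuous θ := by
  have contF : ∀ n : ℤ, Continuous (F n) := by
    intro n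
    induction n using Int.induction_on with
    | zero =>
        have h : F 0 = id := funext fun p => hF0 p
        rw [h]; exact continuous_id
    | succ n ih =>
        have h : F (n + 1) = fun p => f n (F n p) := funext (hFs n)
        rw [h]; exact (f n).continuous.comp ih
    | pred n ih =>
        have h : F (-(n : ℤ) - 1) = fun p => (f (-(n : ℤ) - 1)).symm (F (-(n : ℤ)) p) := by
          funext p
          have h2 := hFs (-(n : ℤ) - 1) p
          have h3 : (-(n : ℤ) - 1) + 1 = -(n : ℤ) := by ring
          rw [h3] at h2
          rw [h2]
          simp
        rw [h]
        exact (f _).symm.continuous.comp ih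
  apply SeqContinuous.continuous
  intro u a hu
  apply Filter.tendsto_of_subseq_tendsto
  intro ns hns
  obtain ⟨q, -, φ, hφ, hq⟩ := isCompact_univ.tendsto_subseq
    (x := fun k => θ (u (ns k))) (fun k => Set.mem_univ _)
  refine ⟨φ, ?_⟩
  have key : ∀ n : ℤ, dist (F n q) (a.1 n) ≤ β := by
    intro n
    have hval : Filter.Tendsto (fun k => (u (ns (φ k))).1 n) Filter.atTop (nhds (a.1 n)) :=
      (((continuous_apply n).comp continuous_subtype_val).continuousAt.tendsto).comp
        (hu.comp (hns.comp hφ.tendsto_atTop))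
    have hFt : Filter.Tendsto (fun k => F n (θ (u (ns (φ k))))) Filter.atTop (nhds (F n q)) :=
      ((contF n).continuousAt.tendsto).comp hq
    have hdist := hFt.dist hval
    exact le_of_tendsto hdist (Filter.Eventually.of_forall fun k => hθ _ n)
  have hqa : q = θ a := by
    by_contra h
    obtain ⟨n, hn⟩ := hexp q (θ a) h
    have h2 : dist (F n q) (F n (θ a)) ≤ 2 * β := by
      calc dist (F n q) (F n (θ a))
          ≤ dist (F n q) (a.1 n) + dist (a.1 n) (F n (θ a)) := dist_triangle _ _ _
        _ ≤ β + β := add_le_add (key n) (by rw [dist_comm]; exact hθ a n)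
        _ = 2 * β := by ring
    linarith
  rw [hqa] at hq
  exact hq
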